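/- Let A be a commutative ring, f ∈ A[T] a monic polynomial of degree n ≥ 1, C = A[T]/(f), and γ ∈ C the image of T, so that C is a free A-module with basis 1, γ, …, γ^{n−1}. Let λ : C → A be the unique A-linear map with λ(γ^i) = 0 for 0 ≤ i ≤ n−2 and λ(γ^{n−1}) = 1. Then for every c ∈ C, the trace of the A-linear endomorphism 'multiplication by c' on C equals λ(f′(γ)·c), where f′ is the formal derivative of f. -/
import Mathlib


open Polynomial

namespace TraceEuler

variable {A : Type*} [CommRing A]

/-- Tail polynomials of `f`: `tail f i = ∑_{k < n-i} a_{k+i+1} X^k`. -/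
noncomputable def tail (f : A[X]) (i : ℕ) : A[X] :=
  ∑ k ∈ Finset.range (f.natDegree - i), C (f.coeff (k + i + 1)) * X ^ k

lemma tail_natDegree_lt (f : A[X]) (hn : 1 ≤ f.natDegree) (i : ℕ) :
    (tail f i).natDegree < f.natDegree := by
  have : (tail f i).natDegree ≤ f.natDegree - 1 := by
    refine Polynomial.natDegree_sum_le_of_forall_le _ _ fun k hk => ?_
    refine le_trans natDegree_mul_le ?_
    simp only [Finset.mem_range] at hk
    have := Polynomial.natDegree_X_pow_le (R := A) k
    simp only [natDegree_C, zero_add]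
    omega
  omega

lemma coeff_tail (f : A[X]) (i m : ℕ) :
    (tail f i).coeff m = if m < f.natDegree - i then f.coeff (m + i + 1) else 0 := by
  rw [tail, finset_sum_coeff]
  simp_rw [coeff_C_mul, coeff_X_pow, mul_ite, mul_one, mul_zero]
  rw [Finset.sum_ite_eq (Finset.range _) m]
  simp [Finset.mem_range]

lemma tail_rec (f : A[X]) (i : ℕ) :
    tail f i = C (f.coeff (i + 1)) + X * tail f (i + 1) := by
  rcases le_or_gt f.natDegree i with h | h
  · have h1 : f.natDegree - i = 0 := Nat.sub_eq_zero_of_le h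
    have h2 : f.natDegree - (i+1) = 0 := Nat.sub_eq_zero_of_le (le_trans h (Nat.le_succ i))
    have h3 : f.coeff (i+1) = 0 := coeff_eq_zero_of_natDegree_lt (by omega)
    simp [tail, h1, h2, h3]
  · have h1 : f.natDegree - i = (f.natDegree - (i+1)) + 1 := by omega
    simp only [tail]
    rw [h1, Finset.sum_range_succ' (fun k => C (f.coeff (k + i + 1)) * X ^ k)]
    simp only [pow_zero, mul_one]
    rw [Finset.mul_sum, add_comm]
    congr 1
    · simp
    · refine Finset.sum_congr rfl fun k _ => ?_
      rw [show k + 1 + i + 1 = k + (i + 1) + 1 by omega]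
      ring

lemma X_mul_tail_zero (f : A[X]) (hf : f.Monic) (hn : 1 ≤ f.natDegree) :
    X * tail f 0 = f - C (f.coeff 0) := by
  have h := f.as_sum_range' (f.natDegree + 1) (Nat.lt_succ_self _)
  rw [eq_sub_iff_add_eq, add_comm]
  conv_rhs => rw [h]
  rw [Finset.sum_range_succ']
  simp only [monomial_zero_left, pow_zero]
  rw [add_comm]
  congr 1
  simp only [tail, Nat.sub_zero]
  rw [Finset.mul_sum]
  refine Finset.sum_congr rfl fun k _ => ?_
  rw [← C_mul_X_pow_eq_monomial]
  ring


section
variable {A : Type*} [CommRing A]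

lemma lam_mk (f : A[X]) (hn : 1 ≤ f.natDegree) (lam : AdjoinRoot f →ₗ[A] A)
    (hlam : ∀ i : Fin f.natDegree,
      lam ((AdjoinRoot.root f) ^ (i : ℕ)) = if (i : ℕ) = f.natDegree - 1 then 1 else 0)
    (p : A[X]) (hp : p.natDegree < f.natDegree) :
    lam (AdjoinRoot.mk f p) = p.coeff (f.natDegree - 1) := by
  conv_lhs => rw [p.as_sum_range' f.natDegree hp]
  rw [map_sum, map_sum]
  have key : ∀ i ∈ Finset.range f.natDegree,
      lam (AdjoinRoot.mk f ((monomial i) (p.coeff i)))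
        = if i = f.natDegree - 1 then p.coeff i else 0 := by
    intro i hi
    rw [Finset.mem_range] at hi
    rw [← C_mul_X_pow_eq_monomial, map_mul, map_pow, AdjoinRoot.mk_X, AdjoinRoot.mk_C,
      ← AdjoinRoot.algebraMap_eq, ← Algebra.smul_def, map_smul, hlam ⟨i, hi⟩]
    simp [smul_eq_mul, mul_ite]
  rw [Finset.sum_congr rfl key, Finset.sum_ite_eq' (Finset.range f.natDegree)]
  rw [if_pos (Finset.mem_range.mpr (by omega))]

lemma root_mul_mk_tail_zero (f : A[X]) (hf : f.Monic) (hn : 1 ≤ f.natDegree) :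
    AdjoinRoot.root f * AdjoinRoot.mk f (tail f 0)
      = - algebraMap A (AdjoinRoot f) (f.coeff 0) := by
  rw [← AdjoinRoot.mk_X, ← map_mul, X_mul_tail_zero f hf hn, map_sub, AdjoinRoot.mk_self,
    zero_sub, AdjoinRoot.mk_C, AdjoinRoot.algebraMap_eq]

lemma root_mul_mk_tail_succ (f : A[X]) (i : ℕ) :
    AdjoinRoot.root f * AdjoinRoot.mk f (tail f (i + 1))
      = AdjoinRoot.mk f (tail f i) - algebraMap A (AdjoinRoot f) (f.coeff (i + 1)) := by
  have h : X * tail f (i + 1) = tail f i - C (f.coeff (i + 1)) := by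
    rw [tail_rec f i]; ring
  rw [← AdjoinRoot.mk_X, ← map_mul, h, map_sub, AdjoinRoot.mk_C, AdjoinRoot.algebraMap_eq]

lemma lam_tail_mul_pow (f : A[X]) (hf : f.Monic) (hn : 1 ≤ f.natDegree)
    (lam : AdjoinRoot f →ₗ[A] A)
    (hlam : ∀ i : Fin f.natDegree,
      lam ((AdjoinRoot.root f) ^ (i : ℕ)) = if (i : ℕ) = f.natDegree - 1 then 1 else 0) :
    ∀ j, j < f.natDegree → ∀ i,
    lam (AdjoinRoot.mk f (tail f i) * (AdjoinRoot.root f) ^ j)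
      = if i = j then 1 else 0 := by
  intro j
  induction j with
  | zero =>
    intro _ i
    rw [pow_zero, mul_one, lam_mk f hn lam hlam _ (tail_natDegree_lt f hn i), coeff_tail]
    rcases eq_or_ne i 0 with rfl | hi
    · rw [if_pos (by omega), if_pos rfl,
        show f.natDegree - 1 + 0 + 1 = f.natDegree by omega, hf.coeff_natDegree]
    · rw [if_neg (by omega), if_neg hi]
  | succ j ih =>
    intro hj i
    have hγ : lam ((AdjoinRoot.root f) ^ j) = 0 := by
      have := hlam ⟨j, by omega⟩
      simpa [show ¬ (j = f.natDegree - 1) by omega] using this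
    cases i with
    | zero =>
      have hre : AdjoinRoot.mk f (tail f 0) * (AdjoinRoot.root f) ^ (j + 1)
          = (AdjoinRoot.root f * AdjoinRoot.mk f (tail f 0)) * (AdjoinRoot.root f) ^ j := by
        ring
      rw [hre, root_mul_mk_tail_zero f hf hn, neg_mul, ← Algebra.smul_def, map_neg, map_smul,
        hγ, smul_zero, neg_zero, if_neg (by omega)]
    | succ i =>
      have hre : AdjoinRoot.mk f (tail f (i + 1)) * (AdjoinRoot.root f) ^ (j + 1)
          = (AdjoinRoot.root f * AdjoinRoot.mk f (tail f (i + 1))) * (AdjoinRoot.root f) ^ j := by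
        ring
      rw [hre, root_mul_mk_tail_succ f, sub_mul, map_sub, ih (by omega) i,
        ← Algebra.smul_def, map_smul, hγ, smul_zero, sub_zero]
      simp

lemma sum_tail_mul_X_pow (f : A[X]) :
    ∑ i ∈ Finset.range f.natDegree, tail f i * X ^ i = derivative f := by
  ext m
  rw [finset_sum_coeff, coeff_derivative]
  simp_rw [coeff_mul_X_pow', coeff_tail]
  rcases lt_or_ge m f.natDegree with hm | hm
  · have key : ∀ i ∈ Finset.range f.natDegree,
        (if i ≤ m then (if m - i < f.natDegree - i then f.coeff (m - i + i + 1) else 0) else 0)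
          = if i ∈ Finset.range (m + 1) then f.coeff (m + 1) else 0 := by
      intro i hi
      rw [Finset.mem_range] at hi
      rcases le_or_gt i m with h | h
      · rw [if_pos h, if_pos (by omega), if_pos (Finset.mem_range.mpr (by omega))]
        congr 1
        omega
      · rw [if_neg (by omega), if_neg (by rw [Finset.mem_range]; omega)]
    rw [Finset.sum_congr rfl key, Finset.sum_ite_mem, Finset.inter_eq_right.mpr
      (Finset.range_subset_range.mpr (by omega)), Finset.sum_const, Finset.card_range,
      nsmul_eq_mul]
    push_cast
    ring
  · have h0 : f.coeff (m + 1) = 0 := coeff_eq_zero_of_natDegree_lt (by omega)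
    rw [h0, zero_mul]
    refine Finset.sum_eq_zero fun i hi => ?_
    rw [Finset.mem_range] at hi
    rcases le_or_gt i m with h | h
    · rw [if_pos h, if_neg (by omega)]
    · rw [if_neg (by omega)]

end

end TraceEuler

open TraceEuler

/-- **Trace via the Euler/Tate functional.**
Let `A` be a commutative ring, `f ∈ A[T]` monic of degree `n ≥ 1`,
`C = A[T]/(f)` and `γ` the image of `T`, so that `C` is free over `A` with
basis `1, γ, …, γ^{n-1}`.  Let `λ` be the `A`-linear functional extracting the
coefficient of `γ^{n-1}`.  Then for every `c ∈ C` the trace of multiplication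
by `c` on `C` equals `λ (f'(γ) * c)`. -/
theorem trace_eq_lambda_of_derivative_mul
    (A : Type*) [CommRing A] (f : A[X]) (hf : f.Monic) (hn : 1 ≤ f.natDegree)
    (lam : AdjoinRoot f →ₗ[A] A)
    (hlam : ∀ i : Fin f.natDegree,
      lam ((AdjoinRoot.root f) ^ (i : ℕ)) = if (i : ℕ) = f.natDegree - 1 then 1 else 0)
    (c : AdjoinRoot f) :
    LinearMap.trace A (AdjoinRoot f) (LinearMap.mul A (AdjoinRoot f) c) =
      lam ((Polynomial.aeval (AdjoinRoot.root f)) (Polynomial.derivative f) * c) := by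
  classical
  have hdim : (AdjoinRoot.powerBasis' hf).dim = f.natDegree := AdjoinRoot.powerBasis'_dim hf
  have hrepr : ∀ (i : Fin (AdjoinRoot.powerBasis' hf).dim) (y : AdjoinRoot f),
      (AdjoinRoot.powerBasis' hf).basis.repr y i
        = lam (AdjoinRoot.mk f (tail f (i : ℕ)) * y) := by
    intro i y
    conv_rhs => rw [← (AdjoinRoot.powerBasis' hf).basis.sum_repr y]
    rw [Finset.mul_sum, map_sum]
    have key : ∀ j : Fin (AdjoinRoot.powerBasis' hf).dim,
        lam (AdjoinRoot.mk f (tail f (i : ℕ)) *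
            ((AdjoinRoot.powerBasis' hf).basis.repr y j • (AdjoinRoot.powerBasis' hf).basis j))
          = if j = i then (AdjoinRoot.powerBasis' hf).basis.repr y j else 0 := by
      intro j
      rw [mul_smul_comm, map_smul, (AdjoinRoot.powerBasis' hf).basis_eq_pow j,
        show (AdjoinRoot.powerBasis' hf).gen = AdjoinRoot.root f from rfl,
        lam_tail_mul_pow f hf hn lam hlam (j : ℕ) (hdim ▸ j.isLt) (i : ℕ)]
      rcases eq_or_ne j i with rfl | hij
      · rw [if_pos rfl, if_pos rfl, smul_eq_mul, mul_one]
      · rw [if_neg (fun h => hij (Fin.ext h.symm)), if_neg hij, smul_zero]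
    rw [Finset.sum_congr rfl (fun j _ => key j), Finset.sum_ite_eq' Finset.univ i,
      if_pos (Finset.mem_univ i)]
  rw [LinearMap.trace_eq_matrix_trace A (AdjoinRoot.powerBasis' hf).basis, Matrix.trace]
  have hdiag : ∀ i : Fin (AdjoinRoot.powerBasis' hf).dim,
      (LinearMap.toMatrix (AdjoinRoot.powerBasis' hf).basis (AdjoinRoot.powerBasis' hf).basis
          (LinearMap.mul A (AdjoinRoot f) c)).diag i
        = lam (AdjoinRoot.mk f (tail f (i : ℕ)) * (c * (AdjoinRoot.root f) ^ (i : ℕ))) := by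
    intro i
    rw [Matrix.diag_apply, LinearMap.toMatrix_apply, LinearMap.mul_apply',
      (AdjoinRoot.powerBasis' hf).basis_eq_pow,
      show (AdjoinRoot.powerBasis' hf).gen = AdjoinRoot.root f from rfl, hrepr]
  rw [Finset.sum_congr rfl (fun i _ => hdiag i), ← map_sum]
  congr 1
  rw [Fin.sum_univ_eq_sum_range
      (fun i => AdjoinRoot.mk f (tail f i) * (c * (AdjoinRoot.root f) ^ i)), hdim,
    AdjoinRoot.aeval_eq, ← sum_tail_mul_X_pow f, map_sum, Finset.sum_mul]
  refine Finset.sum_congr rfl fun i _ => ?_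
  rw [map_mul, map_pow, AdjoinRoot.mk_X]
  ring
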